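/- arXiv:2507.11228 — 3 statements merged into one kernel-verified Lean document; each statement's English description precedes it below -/
import Mathlib

section
/- Fix w* > 0 and γ ∈ (1, 2), and define the gradient descent map T(w) = w - (γ/σ'(w*))·(σ(w) - σ(w*)) where σ is the sigmoid. Then for every w ≥ w*, one has |T(w) - w*| < |w - w*| (one-step contraction on the right of w*), with the convention that the inequality is interpreted as T(w*) = w* when w = w*, i.e. for all w > w*, |T(w) - w*| < w - w*. -/
noncomputable def sigmoid (w : ℝ) : ℝ := 1 / (1 + Real.exp (-w))

lemma sigmoid_hasDerivAt (w : ℝ) :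
    HasDerivAt sigmoid (Real.exp (-w) / (1 + Real.exp (-w))^2) w := by
  have hpos : 0 < 1 + Real.exp (-w) := by positivity
  have h1 : HasDerivAt (fun x : ℝ => 1 + Real.exp (-x)) (-Real.exp (-w)) w := by
    have := ((hasDerivAt_id w).neg).exp.const_add 1
    simpa using this
  have h2 := h1.inv (ne_of_gt hpos)
  have : HasDerivAt (fun x : ℝ => (1 + Real.exp (-x))⁻¹)
      (Real.exp (-w) / (1 + Real.exp (-w))^2) w := by
    rw [neg_neg] at h2
    exact h2
  have he : sigmoid = fun x : ℝ => (1 + Real.exp (-x))⁻¹ := by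
    funext x; simp [sigmoid]
  rw [he]; exact this

lemma sigmoid_deriv (w : ℝ) :
    deriv sigmoid w = Real.exp (-w) / (1 + Real.exp (-w))^2 :=
  (sigmoid_hasDerivAt w).deriv

theorem one_step_contraction_from_right
    (wstar γ : ℝ) (hwstar : 0 < wstar) (hγ1 : 1 < γ) (hγ2 : γ < 2)
    (T : ℝ → ℝ)
    (hT : ∀ w, T w = w - (γ / deriv sigmoid wstar) * (sigmoid w - sigmoid wstar)) :
    T wstar = wstar ∧ ∀ w, wstar < w → |T w - wstar| < w - wstar := by
  have hDstar : deriv sigmoid wstar = Real.exp (-wstar) / (1 + Real.exp (-wstar))^2 :=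
    sigmoid_deriv wstar
  have hDpos : 0 < deriv sigmoid wstar := by rw [hDstar]; positivity
  constructor
  · rw [hT]; ring
  · intro w hw
    -- MVT
    obtain ⟨c, hc, hslope⟩ := exists_hasDerivAt_eq_slope sigmoid
      (fun x => Real.exp (-x) / (1 + Real.exp (-x))^2) hw
      (fun x _ => (sigmoid_hasDerivAt x).continuousAt.continuousWithinAt)
      (fun x _ => sigmoid_hasDerivAt x)
    have hwpos : 0 < w - wstar := by linarith
    have hdiff : sigmoid w - sigmoid wstar
        = (Real.exp (-c) / (1 + Real.exp (-c))^2) * (w - wstar) := by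
      have h := hslope.symm
      rw [div_eq_iff (ne_of_gt hwpos)] at h
      exact h
    have hcpos : 0 < Real.exp (-c) / (1 + Real.exp (-c))^2 := by positivity
    -- f c ≤ f wstar
    have hle : Real.exp (-c) / (1 + Real.exp (-c))^2
        ≤ Real.exp (-wstar) / (1 + Real.exp (-wstar))^2 := by
      have hcw : wstar < c := hc.1
      set a := Real.exp (-c) with ha
      set b := Real.exp (-wstar) with hb
      have hab : a < b := Real.exp_lt_exp.2 (by linarith)
      have ha0 : 0 < a := Real.exp_pos _
      have hb1 : b < 1 := Real.exp_lt_one_iff.2 (by linarith)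
      rw [div_le_div_iff₀ (by positivity) (by positivity)]
      have hab1 : a * b < 1 := by nlinarith
      nlinarith [mul_pos (sub_pos.2 hab) (sub_pos.2 hab1)]
    rw [hT, hdiff]
    have key : 0 < (γ / deriv sigmoid wstar) * (Real.exp (-c) / (1 + Real.exp (-c))^2) := by
      positivity
    have key2 : (γ / deriv sigmoid wstar) * (Real.exp (-c) / (1 + Real.exp (-c))^2) < 2 := by
      have : (γ / deriv sigmoid wstar) * (Real.exp (-c) / (1 + Real.exp (-c))^2)
          ≤ γ := by
        rw [div_mul_eq_mul_div, div_le_iff₀ hDpos]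
        have hγ0 : 0 < γ := by linarith
        calc γ * (Real.exp (-c) / (1 + Real.exp (-c))^2)
            ≤ γ * (Real.exp (-wstar) / (1 + Real.exp (-wstar))^2) := by
              exact mul_le_mul_of_nonneg_left hle (le_of_lt hγ0)
          _ = γ * deriv sigmoid wstar := by rw [hDstar]
      linarith
    rw [abs_lt]
    constructor <;> nlinarith
end

section
/- Fix w* > 0 and γ ∈ (1, 2), let T(w) = w - (γ/σ'(w*))·(σ(w) - σ(w*)), and for w ≠ w* define R(w) = (σ(w) - σ(w*))/(w - w*). If w_t > w* and w_{t+1} = T(w_t) < w*, then w_{t+2} = T(w_{t+1}) satisfies (w_{t+2} - w*)/(w_t - w*) ≤ 1 - γ(2-γ)·R(w_t)²/σ'(w*)² < 1. -/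
lemma sigmoid_pos (w : ℝ) : 0 < sigmoid w := by
  unfold sigmoid
  positivity

lemma sigmoid_lt_one (w : ℝ) : sigmoid w < 1 := by
  unfold sigmoid
  rw [div_lt_one (by positivity)]
  linarith [Real.exp_pos (-w)]

lemma hasDerivAt_sigmoid (w : ℝ) :
    HasDerivAt sigmoid (sigmoid w * (1 - sigmoid w)) w := by
  have h1 : HasDerivAt (fun w : ℝ => Real.exp (-w)) (-Real.exp (-w)) w := by
    have := (Real.hasDerivAt_exp (-w)).comp w ((hasDerivAt_id w).neg)
    simp at this; exact this
  have h2 : HasDerivAt (fun w : ℝ => 1 + Real.exp (-w)) (-Real.exp (-w)) w :=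
    h1.const_add 1
  have hne : (1 + Real.exp (-w)) ≠ 0 := by positivity
  have h3 := h2.inv hne
  have : sigmoid = fun w : ℝ => (1 + Real.exp (-w))⁻¹ := by
    funext z; unfold sigmoid; rw [one_div]
  rw [this]
  refine h3.congr_deriv ?_
  show - -Real.exp (-w) / (1 + Real.exp (-w)) ^ 2 = (1 + Real.exp (-w))⁻¹ * (1 - (1 + Real.exp (-w))⁻¹)
  field_simp
  ring

lemma deriv_sigmoid (w : ℝ) : deriv sigmoid w = sigmoid w * (1 - sigmoid w) :=
  (hasDerivAt_sigmoid w).deriv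

lemma sigmoid_strictMono : StrictMono sigmoid := by
  apply strictMono_of_deriv_pos
  intro w
  rw [deriv_sigmoid]
  have := sigmoid_pos w
  have := sigmoid_lt_one w
  nlinarith

lemma sigmoid_logit {x : ℝ} (hx : 0 < x) (hx1 : x < 1) :
    sigmoid (Real.log (x / (1 - x))) = x := by
  unfold sigmoid
  have h1 : (0:ℝ) < 1 - x := by linarith
  rw [Real.exp_neg, Real.exp_log (div_pos hx h1)]
  rw [inv_div]
  have h2 : 1 + (1 - x) / x = 1 / x := by
    field_simp
    ring
  rw [h2, one_div_one_div]

lemma logit_sigmoid (w : ℝ) :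
    Real.log (sigmoid w) - Real.log (1 - sigmoid w) = w := by
  have h0 := sigmoid_pos w
  have h1 := sigmoid_lt_one w
  rw [← Real.log_div (ne_of_gt h0) (by linarith)]
  have : sigmoid w / (1 - sigmoid w) = Real.exp w := by
    have hE := Real.exp_pos (-w)
    have hne : (1 + Real.exp (-w)) ≠ 0 := by positivity
    rw [div_eq_iff (by linarith)]
    unfold sigmoid
    rw [Real.exp_neg] at *
    field_simp
    ring
  rw [this, Real.log_exp]


lemma logit_jensen {x y : ℝ} (hx : 0 < x) (hxy : x ≤ y) (hy : y < 1) :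
    4 * (y - x) ≤
      (Real.log y - Real.log (1 - y) - (Real.log x - Real.log (1 - x))) *
        ((x + y) * (2 - x - y)) := by
  rcases eq_or_lt_of_le hxy with rfl | hlt
  · simp
  set D : ℝ → ℝ := fun z =>
    Real.log z - Real.log (1 - z) - 4 * (z - x) / ((x + z) * (2 - x - z)) with hDdef
  set D' : ℝ → ℝ := fun z =>
    z⁻¹ - (-1) / (1 - z) -
      (4 * ((x + z) * (2 - x - z)) - 4 * (z - x) * (1 * (2 - x - z) + (x + z) * (-1))) /
        ((x + z) * (2 - x - z)) ^ 2 with hD'def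
  have key : ∀ z ∈ Set.Icc x y, HasDerivAt D (D' z) z := by
    intro z hz
    have hz0 : 0 < z := lt_of_lt_of_le hx hz.1
    have hz1 : z < 1 := lt_of_le_of_lt hz.2 hy
    have hN : 0 < (x + z) * (2 - x - z) := by
      apply mul_pos (by linarith) (by linarith)
    have d1 : HasDerivAt (fun z : ℝ => Real.log z) z⁻¹ z :=
      Real.hasDerivAt_log (ne_of_gt hz0)
    have d2 : HasDerivAt (fun z : ℝ => 1 - z) (-1) z := by
      simpa using (hasDerivAt_id z).const_sub 1
    have d3 : HasDerivAt (fun z : ℝ => Real.log (1 - z)) ((-1) / (1 - z)) z :=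
      d2.log (by linarith)
    have d4 : HasDerivAt (fun z : ℝ => 4 * (z - x)) 4 z := by
      simpa using ((hasDerivAt_id z).sub_const x).const_mul (4 : ℝ)
    have d5 : HasDerivAt (fun z : ℝ => (x + z) * (2 - x - z))
        (1 * (2 - x - z) + (x + z) * (-1)) z := by
      have e1 : HasDerivAt (fun z : ℝ => x + z) 1 z := by
        simpa using (hasDerivAt_id z).const_add x
      have e2 : HasDerivAt (fun z : ℝ => 2 - x - z) (-1) z := by
        have : (fun z : ℝ => 2 - x - z) = fun z : ℝ => (2 - x) - z := by
          funext t; ring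
        rw [this]
        simpa using (hasDerivAt_id z).const_sub (2 - x)
      exact e1.mul e2
    have d6 := d4.div d5 (ne_of_gt hN)
    exact (d1.sub d3).sub d6
  have hnonneg : ∀ z ∈ Set.Ioo x y, 0 ≤ D' z := by
    intro z hz
    have hz0 : 0 < z := lt_of_lt_of_le hx (le_of_lt hz.1)
    have hz1 : z < 1 := lt_of_le_of_lt (le_of_lt hz.2) hy
    have hz1' : 0 < 1 - z := by linarith
    have hN : 0 < (x + z) * (2 - x - z) := by
      apply mul_pos (by linarith) (by linarith)
    rw [hD'def]
    simp only []
    rw [sub_nonneg, div_le_iff₀ (by positivity)]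
    have hrw : (z⁻¹ - (-1) / (1 - z)) = 1 / (z * (1 - z)) := by
      field_simp
      ring
    rw [hrw]
    rw [one_div, ← div_eq_inv_mul, le_div_iff₀ (by positivity)]
    nlinarith [sq_nonneg ((z - x) * (x + 3 * z - 2)),
      mul_nonneg (mul_nonneg (mul_nonneg hz0.le hz1'.le) (sq_nonneg (z - x))) (le_of_lt (by norm_num : (0:ℝ) < 4))]
  have hmono : MonotoneOn D (Set.Icc x y) := by
    apply monotoneOn_of_deriv_nonneg (convex_Icc x y)
    · intro z hz
      exact ((key z hz).differentiableAt.continuousAt).continuousWithinAt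
    · intro z hz
      rw [interior_Icc] at hz
      exact ((key z (Set.Ioo_subset_Icc_self hz)).differentiableAt).differentiableWithinAt
    · intro z hz
      rw [interior_Icc] at hz
      rw [(key z (Set.Ioo_subset_Icc_self hz)).deriv]
      exact hnonneg z hz
  have hxy' : D x ≤ D y :=
    hmono (Set.left_mem_Icc.2 hxy) (Set.right_mem_Icc.2 hxy) hxy
  rw [hDdef] at hxy'
  simp only [] at hxy'
  have hNy : 0 < (x + y) * (2 - x - y) := by
    apply mul_pos (by linarith) (by linarith)
  have hxx : 4 * (x - x) / ((x + x) * (2 - x - x)) = 0 := by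
    simp
  rw [hxx, sub_zero] at hxy'
  have : 4 * (y - x) / ((x + y) * (2 - x - y)) ≤
      Real.log y - Real.log (1 - y) - (Real.log x - Real.log (1 - x)) := by
    linarith
  calc 4 * (y - x) = 4 * (y - x) / ((x + y) * (2 - x - y)) * ((x + y) * (2 - x - y)) := by
        field_simp
        rw [div_self (ne_of_gt hNy)]
    _ ≤ _ := by
        apply mul_le_mul_of_nonneg_right this (le_of_lt hNy)

lemma lemJ {a b : ℝ} (hab : a ≤ b) :
    4 * (sigmoid b - sigmoid a) ≤
      (b - a) * ((sigmoid a + sigmoid b) * (2 - sigmoid a - sigmoid b)) := by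
  have h := logit_jensen (sigmoid_pos a) (sigmoid_strictMono.monotone hab) (sigmoid_lt_one b)
  rwa [logit_sigmoid, logit_sigmoid] at h

set_option maxHeartbeats 1000000 in
theorem two_step_contraction_from_right
    (wstar γ : ℝ) (hwstar : 0 < wstar) (hγ1 : 1 < γ) (hγ2 : γ < 2)
    (T : ℝ → ℝ)
    (hT : ∀ w, T w = w - (γ / deriv sigmoid wstar) * (sigmoid w - sigmoid wstar))
    (R : ℝ → ℝ)
    (hR : ∀ w, w ≠ wstar → R w = (sigmoid w - sigmoid wstar) / (w - wstar))
    (wt : ℝ) (hwt : wstar < wt) (hcross : T wt < wstar) :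
    (T (T wt) - wstar) / (wt - wstar)
      ≤ 1 - γ * (2 - γ) * (R wt) ^ 2 / (deriv sigmoid wstar) ^ 2 ∧
    1 - γ * (2 - γ) * (R wt) ^ 2 / (deriv sigmoid wstar) ^ 2 < 1 := by
  have hp0 := sigmoid_pos wstar
  have hp1 := sigmoid_lt_one wstar
  have hphalf : 1 / 2 < sigmoid wstar := by
    have h0 : sigmoid 0 = 1 / 2 := by unfold sigmoid; norm_num
    rw [← h0]
    exact sigmoid_strictMono hwstar
  set p := sigmoid wstar with hpdef
  set q := sigmoid wt with hqdef
  have hq1 := sigmoid_lt_one wt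
  have hpq : p < q := sigmoid_strictMono hwt
  set s := deriv sigmoid wstar with hsdef
  have hs : s = p * (1 - p) := by
    rw [hsdef, hpdef]; exact deriv_sigmoid wstar
  have hspos : 0 < s := by rw [hs]; nlinarith
  set e := wt - wstar with hedef
  have hepos : 0 < e := by rw [hedef]; linarith
  set u := q - p with hudef
  have hupos : 0 < u := by rw [hudef]; linarith
  clear_value p q s e u
  have hTwt : T wt = wt - γ / s * u := by
    rw [hT wt, ← hqdef, ← hudef]
  set h := wstar - T wt with hhdef
  clear_value h
  have hhpos : 0 < h := by rw [hhdef]; linarith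
  have hI1 : γ * u = s * (e + h) := by
    have h2 : γ / s * u = e + h := by
      rw [hhdef, hTwt, hedef]; ring
    field_simp at h2
    linarith
  -- u < s * e
  have hJ1 := lemJ (le_of_lt hwt)
  rw [← hpdef, ← hqdef, ← hedef] at hJ1
  have hF2 : u < s * e := by
    have hkey : (p + q) * (2 - p - q) < 4 * s := by
      rw [hs]; nlinarith [hpq, hphalf, hq1]
    nlinarith [mul_lt_mul_of_pos_left hkey hepos]
  -- s(e+h) < 2u
  have hF3 : s * (e + h) < 2 * u := by
    rw [← hI1]; nlinarith
  -- r > 2p - q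
  set r := sigmoid (T wt) with hrdef
  clear_value r
  have hr0 : 0 < r := by rw [hrdef]; exact sigmoid_pos (T wt)
  have hrp : r < p := by
    rw [hrdef, hpdef]; exact sigmoid_strictMono hcross
  have hTwt2 : T wt = wt - (e + h) := by
    rw [hhdef, hedef]; ring
  have hF4 : 2 * p - q < r := by
    rcases le_or_gt (2 * p - q) 0 with hc | hc
    · linarith
    · set a := Real.log ((2 * p - q) / (1 - (2 * p - q))) with hadef
      have hσa : sigmoid a = 2 * p - q := by
        rw [hadef]; exact sigmoid_logit hc (by linarith)
      clear_value a
      have haw : a < wt := by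
        by_contra hcon
        push_neg at hcon
        have := sigmoid_strictMono.monotone hcon
        rw [hσa, ← hqdef] at this
        linarith
      have hJ2 := lemJ (le_of_lt haw)
      rw [hσa, ← hqdef] at hJ2
      have h4s : (2 * p - q + q) * (2 - (2 * p - q) - q) = 4 * s := by
        rw [hs]; ring
      rw [h4s] at hJ2
      have hTa : a < T wt := by
        rw [hTwt2]
        nlinarith [hJ2, hF3, hspos]
      have hmono2 := sigmoid_strictMono hTa
      rw [hσa, ← hrdef] at hmono2
      linarith
  -- p - r ≤ (γ-1) u
  have hJ3 := lemJ (show T wt ≤ wt by linarith)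
  rw [← hqdef, ← hrdef, hTwt2] at hJ3
  have hwtT : wt - (wt - (e + h)) = e + h := by ring
  rw [hwtT] at hJ3
  have hg : (r + q) * (2 - r - q) ≤ 4 * s := by
    rw [hs]
    nlinarith [mul_nonneg (by linarith : (0:ℝ) ≤ r + q - 2 * p)
      (by linarith : (0:ℝ) ≤ r + q + 2 * p - 2)]
  have hF5 : p - r ≤ (γ - 1) * u := by
    have hc1 : 4 * (q - r) ≤ (e + h) * (4 * s) := by
      calc 4 * (q - r) ≤ (e + h) * ((r + q) * (2 - r - q)) := hJ3
        _ ≤ (e + h) * (4 * s) := by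
            apply mul_le_mul_of_nonneg_left hg (by linarith)
    have hc2 : (e + h) * (4 * s) = 4 * (γ * u) := by
      rw [hI1]; ring
    rw [hc2] at hc1
    linarith
  have hRwt : R wt = u / e := by
    rw [hR wt (ne_of_gt hwt), ← hqdef, ← hudef, ← hedef]
  have hTT : T (T wt) - wstar = γ / s * (p - r) - h := by
    have hTr : T wt = wstar - h := by rw [hhdef]; ring
    rw [hT (T wt), ← hrdef, hTr]
    ring
  constructor
  · rw [hRwt, hTT]
    have hsne : s ≠ 0 := ne_of_gt hspos
    have hene : e ≠ 0 := ne_of_gt hepos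
    have hP : γ * (p - r) * s * e ≤ s ^ 2 * e ^ 2 + h * s ^ 2 * e - γ * (2 - γ) * u ^ 2 := by
      have t1 : γ * s * e * (p - r) ≤ γ * s * e * ((γ - 1) * u) :=
        mul_le_mul_of_nonneg_left hF5 (by positivity)
      have t2 : s * e * (γ * u) = s * e * (s * (e + h)) := by rw [hI1]
      have t3 : γ * (2 - γ) * u * u ≤ γ * (2 - γ) * u * (s * e) :=
        mul_le_mul_of_nonneg_left (le_of_lt hF2)
          (mul_nonneg (mul_nonneg (by linarith) (by linarith)) (le_of_lt hupos))
      nlinarith [t1, t2, t3]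
    have h1 : (1 - γ * (2 - γ) * (u / e) ^ 2 / s ^ 2) -
        (γ / s * (p - r) - h) / e =
        (s ^ 2 * e ^ 2 + h * s ^ 2 * e - γ * (2 - γ) * u ^ 2 - γ * (p - r) * s * e) /
          (e ^ 2 * s ^ 2) := by
      field_simp
      ring
    have h2 : 0 ≤ (1 - γ * (2 - γ) * (u / e) ^ 2 / s ^ 2) -
        (γ / s * (p - r) - h) / e := by
      rw [h1]
      apply div_nonneg (by linarith) (by positivity)
    linarith
  · rw [hRwt]
    have hX : 0 < γ * (2 - γ) * (u / e) ^ 2 / s ^ 2 := by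
      apply div_pos
      · exact mul_pos (mul_pos (by linarith) (by linarith))
          (pow_pos (div_pos hupos hepos) 2)
      · positivity
    linarith
end

section
/- Let x₁,…,x_{n_b} ∈ ℝ² with ‖xᵢ‖ ≤ 1, all labels 1, and let w*_b ∈ ℝ² be a critical point of the base objective L_b(w) = (1/n_b)Σᵢ ℓ(-wᵀxᵢ) with ℓ(z) = log(1+e^z). Let sᵢ = √(1-‖xᵢ‖²) and for d > 2 form the dataset in ℝ^d of 2(d-2)n_b points {(xᵢ, ±sᵢe_j) : 1 ≤ i ≤ n_b, 1 ≤ j ≤ d-2}, where e_j ∈ ℝ^{d-2} are coordinate vectors. Then every point of the new dataset has Euclidean norm exactly 1, and w* = (w*_b, 0_{d-2}) is a critical point of the new objective L. -/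
open RealInnerProductSpace

lemma logistic_hasGradientAt {E : Type*} [NormedAddCommGroup E] [InnerProductSpace ℝ E]
    [CompleteSpace E] (v w : E) :
    HasGradientAt (fun u => Real.log (1 + Real.exp (-⟪u, v⟫)))
      ((Real.exp (-⟪w, v⟫) * (-1) / (1 + Real.exp (-⟪w, v⟫))) • v) w := by
  set t := ⟪w, v⟫ with ht
  have hpos : (0:ℝ) < 1 + Real.exp (-t) := by positivity
  have h1 : HasDerivAt (fun z : ℝ => 1 + Real.exp (-z)) (Real.exp (-t) * (-1)) t := by
    simpa using ((Real.hasDerivAt_exp (-t)).comp t (hasDerivAt_neg t)).const_add 1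
  have h2 : HasDerivAt (fun z : ℝ => Real.log (1 + Real.exp (-z)))
      (Real.exp (-t) * (-1) / (1 + Real.exp (-t))) t := h1.log hpos.ne'
  have h3 : HasFDerivAt (fun u : E => ⟪u, v⟫) (innerSL ℝ v) w := by
    have heq : (fun u : E => ⟪u, v⟫) = ⇑(innerSL ℝ v) := by
      ext u; simp [real_inner_comm]
    rw [heq]; exact (innerSL ℝ v).hasFDerivAt
  have h4 := h2.comp_hasFDerivAt w h3
  rw [hasGradientAt_iff_hasFDerivAt]
  have : (InnerProductSpace.toDual ℝ E)
      ((Real.exp (-t) * (-1) / (1 + Real.exp (-t))) • v)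
      = (Real.exp (-t) * (-1) / (1 + Real.exp (-t))) • innerSL ℝ v := by
    ext u
    simp [InnerProductSpace.toDual_apply_apply, real_inner_smul_left]
  rw [this]
  exact h4

lemma logistic_sum_hasGradientAt {E : Type*} [NormedAddCommGroup E] [InnerProductSpace ℝ E]
    [CompleteSpace E] {ι : Type*} [Fintype ι] (v : ι → E) (c : ℝ) (w : E) :
    HasGradientAt (fun u => c * ∑ i, Real.log (1 + Real.exp (-⟪u, v i⟫)))
      (c • ∑ i, (Real.exp (-⟪w, v i⟫) * (-1) / (1 + Real.exp (-⟪w, v i⟫))) • v i) w := by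
  have hterm : ∀ i : ι, HasFDerivAt (fun u : E => Real.log (1 + Real.exp (-⟪u, v i⟫)))
      ((InnerProductSpace.toDual ℝ E)
        ((Real.exp (-⟪w, v i⟫) * (-1) / (1 + Real.exp (-⟪w, v i⟫))) • v i)) w := by
    intro i
    exact (hasGradientAt_iff_hasFDerivAt.mp (logistic_hasGradientAt (v i) w))
  have hsum := HasFDerivAt.fun_sum (fun i (_ : i ∈ Finset.univ) => hterm i)
  have hmul := hsum.const_mul c
  rw [hasGradientAt_iff_hasFDerivAt]
  have : (InnerProductSpace.toDual ℝ E)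
      (c • ∑ i, (Real.exp (-⟪w, v i⟫) * (-1) / (1 + Real.exp (-⟪w, v i⟫))) • v i)
      = c • ∑ i, (InnerProductSpace.toDual ℝ E)
          ((Real.exp (-⟪w, v i⟫) * (-1) / (1 + Real.exp (-⟪w, v i⟫))) • v i) := by
    rw [map_smulₛₗ, map_sum]
    simp
  rw [this]
  exact hmul

theorem sphere_padding_norm_one_and_critical_point
    (nb m : ℕ) (hnb : 0 < nb) (hm : 0 < m)
    (x : Fin nb → EuclideanSpace ℝ (Fin 2)) (hx : ∀ i, ‖x i‖ ≤ 1)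
    (Lb : EuclideanSpace ℝ (Fin 2) → ℝ)
    (hLb : ∀ w, Lb w = (1 / (nb : ℝ)) * ∑ i, Real.log (1 + Real.exp (-⟪w, x i⟫)))
    (wb : EuclideanSpace ℝ (Fin 2)) (hcrit : gradient Lb wb = 0)
    (s : Fin nb → ℝ) (hs : ∀ i, s i = Real.sqrt (1 - ‖x i‖ ^ 2))
    (pad : Fin nb → Fin m → Bool → EuclideanSpace ℝ (Fin 2 ⊕ Fin m))
    (hpad : ∀ i j b, pad i j b = (WithLp.equiv 2 ((k : Fin 2 ⊕ Fin m) → ℝ)).symm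
      (Sum.elim (WithLp.equiv 2 ((k : Fin 2) → ℝ) (x i))
        (fun j' => (if b then (1 : ℝ) else -1) * (if j' = j then s i else 0))))
    (L : EuclideanSpace ℝ (Fin 2 ⊕ Fin m) → ℝ)
    (hL : ∀ w, L w = (1 / (2 * (m : ℝ) * nb)) *
      ∑ i, ∑ j, ∑ b, Real.log (1 + Real.exp (-⟪w, pad i j b⟫))) :
    (∀ i j b, ‖pad i j b‖ = 1) ∧
    gradient L ((WithLp.equiv 2 ((k : Fin 2 ⊕ Fin m) → ℝ)).symm
      (Sum.elim (WithLp.equiv 2 ((k : Fin 2) → ℝ) wb) 0)) = 0 := by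
  -- coordinates of pad
  have hcoord : ∀ i j b (k : Fin 2 ⊕ Fin m), pad i j b k
      = Sum.elim (WithLp.equiv 2 ((k : Fin 2) → ℝ) (x i))
        (fun j' => (if b then (1 : ℝ) else -1) * (if j' = j then s i else 0)) k := by
    intro i j b k; rw [hpad i j b]; rfl
  have hcl : ∀ i j b (a : Fin 2), pad i j b (Sum.inl a) = x i a := by
    intro i j b a; rw [hcoord]; rfl
  have hcr : ∀ i j b (a : Fin m), pad i j b (Sum.inr a)
      = (if b then (1 : ℝ) else -1) * (if a = j then s i else 0) := by
    intro i j b a; rw [hcoord]; rfl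
  constructor
  · -- norms are one
    intro i j b
    have hx2 : (0:ℝ) ≤ 1 - ‖x i‖ ^ 2 := by
      have := hx i
      nlinarith [norm_nonneg (x i)]
    have hs2 : s i ^ 2 = 1 - ‖x i‖ ^ 2 := by
      rw [hs i, Real.sq_sqrt hx2]
    have hxn : ∑ a : Fin 2, (x i) a ^ 2 = ‖x i‖ ^ 2 := by
      rw [EuclideanSpace.norm_eq, Real.sq_sqrt (by positivity)]
      simp [sq_abs]
    have h1 : ∑ a : Fin 2, ‖pad i j b (Sum.inl a)‖ ^ 2 = ‖x i‖ ^ 2 := by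
      rw [← hxn]
      refine Finset.sum_congr rfl fun a _ => ?_
      rw [hcl]
      simp [sq_abs]
    have h2 : ∑ a : Fin m, ‖pad i j b (Sum.inr a)‖ ^ 2 = s i ^ 2 := by
      have : ∀ a : Fin m, ‖pad i j b (Sum.inr a)‖ ^ 2 = if a = j then s i ^ 2 else 0 := by
        intro a
        rw [hcr]
        by_cases hb : b <;> by_cases ha : a = j <;>
          simp [hb, ha, sq_abs]
      rw [Finset.sum_congr rfl fun a _ => this a]
      simp
    rw [EuclideanSpace.norm_eq]
    have hsum : ∑ k : Fin 2 ⊕ Fin m, ‖pad i j b k‖ ^ 2 = 1 := by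
      rw [Fintype.sum_sum_type, h1, h2, hs2]; ring
    rw [hsum, Real.sqrt_one]
  · -- gradient is zero
    set wstar : EuclideanSpace ℝ (Fin 2 ⊕ Fin m) :=
      (WithLp.equiv 2 ((k : Fin 2 ⊕ Fin m) → ℝ)).symm
        (Sum.elim (WithLp.equiv 2 ((k : Fin 2) → ℝ) wb) 0) with hwstar
    have hwl : ∀ a : Fin 2, wstar (Sum.inl a) = wb a := fun a => rfl
    have hwr : ∀ a : Fin m, wstar (Sum.inr a) = 0 := fun a => rfl
    -- inner products agree
    have hinner : ∀ i j b, ⟪wstar, pad i j b⟫ = ⟪wb, x i⟫ := by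
      intro i j b
      rw [PiLp.inner_apply, PiLp.inner_apply, Fintype.sum_sum_type]
      have hr : ∑ a : Fin m, ⟪wstar (Sum.inr a), pad i j b (Sum.inr a)⟫ = 0 := by
        refine Finset.sum_eq_zero fun a _ => ?_
        rw [hwr]
        simp
      rw [hr, add_zero]
      refine Finset.sum_congr rfl fun a _ => ?_
      rw [hwl, hcl]
    set e : Fin nb → ℝ := fun i =>
      Real.exp (-⟪wb, x i⟫) * (-1) / (1 + Real.exp (-⟪wb, x i⟫)) with he
    -- base gradient is zero
    have hLbG : HasGradientAt Lb ((1 / (nb:ℝ)) • ∑ i, e i • x i) wb := by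
      have := logistic_sum_hasGradientAt x (1 / (nb:ℝ)) wb
      have hfun : (fun u => (1 / (nb:ℝ)) * ∑ i, Real.log (1 + Real.exp (-⟪u, x i⟫))) = Lb := by
        funext u; rw [hLb u]
      rw [hfun] at this
      exact this
    have hGb0 : (1 / (nb:ℝ)) • ∑ i, e i • x i = (0 : EuclideanSpace ℝ (Fin 2)) := by
      rw [← hLbG.gradient]; exact hcrit
    have hcoef : ∀ a : Fin 2, ∑ i, e i * x i a = 0 := by
      intro a
      have h := congrArg (fun v => PiLp.proj (𝕜 := ℝ) 2 (fun _ : Fin 2 => ℝ) a v) hGb0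
      simp only [map_smul, map_sum, PiLp.proj_apply, map_zero,
        smul_eq_mul, PiLp.smul_apply] at h
      have hn : (1 / (nb:ℝ)) ≠ 0 := by
        have : (0:ℝ) < nb := by exact_mod_cast hnb
        positivity
      field_simp at h
      convert h using 2
      simp
    -- gradient of L
    set G : EuclideanSpace ℝ (Fin 2 ⊕ Fin m) :=
      (1 / (2 * (m:ℝ) * nb)) • ∑ p : Fin nb × Fin m × Bool, e p.1 • pad p.1 p.2.1 p.2.2
      with hG
    have hLG : HasGradientAt L G wstar := by
      have h := logistic_sum_hasGradientAt
        (fun p : Fin nb × Fin m × Bool => pad p.1 p.2.1 p.2.2) (1 / (2 * (m:ℝ) * nb)) wstar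
      have hfun : (fun u => (1 / (2 * (m:ℝ) * nb)) * ∑ p : Fin nb × Fin m × Bool,
          Real.log (1 + Real.exp (-⟪u, pad p.1 p.2.1 p.2.2⟫))) = L := by
        funext u; rw [hL u]
        congr 1
        rw [Fintype.sum_prod_type]
        refine Finset.sum_congr rfl fun i _ => ?_
        rw [Fintype.sum_prod_type]
      rw [hfun] at h
      have hGeq : ((1 / (2 * (m:ℝ) * nb)) • ∑ p : Fin nb × Fin m × Bool,
          (Real.exp (-⟪wstar, pad p.1 p.2.1 p.2.2⟫) * (-1) /
            (1 + Real.exp (-⟪wstar, pad p.1 p.2.1 p.2.2⟫))) • pad p.1 p.2.1 p.2.2) = G := by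
        rw [hG]
        congr 1
        refine Finset.sum_congr rfl fun p _ => ?_
        rw [hinner p.1 p.2.1 p.2.2, he]
      rw [hGeq] at h
      exact h
    rw [hLG.gradient]
    -- show G = 0 coordinatewise
    rw [hG]
    have hkey : ∀ k : Fin 2 ⊕ Fin m,
        ∑ p : Fin nb × Fin m × Bool, (e p.1 • pad p.1 p.2.1 p.2.2) k = 0 := by
      intro k
      have hsplit : ∑ p : Fin nb × Fin m × Bool, (e p.1 • pad p.1 p.2.1 p.2.2) k
          = ∑ i, ∑ j, ∑ b, e i * pad i j b k := by
        rw [Fintype.sum_prod_type]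
        refine Finset.sum_congr rfl fun i _ => ?_
        rw [Fintype.sum_prod_type]
        rfl
      rw [hsplit]
      cases k with
      | inl a =>
        have : ∀ i : Fin nb, ∑ j : Fin m, ∑ b : Bool, e i * pad i j b (Sum.inl a)
            = (m:ℝ) * (2 * (e i * x i a)) := by
          intro i
          have hb : ∀ j : Fin m, ∑ b : Bool, e i * pad i j b (Sum.inl a)
              = 2 * (e i * x i a) := by
            intro j
            rw [Fintype.sum_bool, hcl, hcl]
            ring
          rw [Finset.sum_congr rfl fun j _ => hb j]
          rw [Finset.sum_const, Finset.card_univ, Fintype.card_fin, nsmul_eq_mul]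
        rw [Finset.sum_congr rfl fun i _ => this i]
        have : ∑ i, (m:ℝ) * (2 * (e i * x i a)) = (2 * m) * ∑ i, e i * x i a := by
          rw [Finset.mul_sum]
          refine Finset.sum_congr rfl fun i _ => ?_
          ring
        rw [this, hcoef a, mul_zero]
      | inr a =>
        refine Finset.sum_eq_zero fun i _ => ?_
        refine Finset.sum_eq_zero fun j _ => ?_
        rw [Fintype.sum_bool, hcr, hcr]
        by_cases ha : a = j <;> simp [ha]
    have hsum0 : (∑ p : Fin nb × Fin m × Bool, e p.1 • pad p.1 p.2.1 p.2.2)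
        = (0 : EuclideanSpace ℝ (Fin 2 ⊕ Fin m)) := by
      ext k
      have hps := map_sum (PiLp.proj (𝕜 := ℝ) 2 (fun _ : Fin 2 ⊕ Fin m => ℝ) k)
        (fun p : Fin nb × Fin m × Bool => e p.1 • pad p.1 p.2.1 p.2.2) Finset.univ
      simp only [PiLp.proj_apply] at hps
      rw [hps]
      simpa using hkey k
    rw [hsum0, smul_zero]
end
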